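/- Let q ∈ (3/4, 1), κ ∈ W = I_q × [0,∞) with κ₂ > 0, τ(v) = ((q-1+v₁)/v₁, v₂/v₁), σ(v) = ((1-q)/(1-v₁), v₂(1-q)/(1-v₁)). For every v ∈ W \ Area(κ) with v₁ ≤ κ₁, there exists u ∈ W \ Area(κ) with u₁ = σᵏ(κ)₁ for some k ≥ 0 and v ∈ L(u), where L(u) = {λu + (1-λ)τ(u) : λ ∈ (0,1]}. -/

import Mathlib

noncomputable def tau (q : ℝ) (v : ℝ × ℝ) : ℝ × ℝ := ((q - 1 + v.1)/v.1, v.2/v.1)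

noncomputable def sig (q : ℝ) (v : ℝ × ℝ) : ℝ × ℝ :=
  ((1 - q)/(1 - v.1), v.2 * (1 - q)/(1 - v.1))

/-- The set `W = I_q × [0,∞)`. -/
noncomputable def W (q : ℝ) : Set (ℝ × ℝ) :=
  (Set.Ioo ((1 - Real.sqrt (4*q - 3))/2) ((1 + Real.sqrt (4*q - 3))/2)) ×ˢ Set.Ici (0:ℝ)

/-- The set of points `{τᵏ(κ), σᵏ(κ) : k ∈ ℕ}`. -/
noncomputable def Points (q : ℝ) (k : ℝ × ℝ) : Set (ℝ × ℝ) :=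
  {p | ∃ n : ℕ, p = (tau q)^[n] k ∨ p = (sig q)^[n] k}

/-- The closed half-plane above the line through `u` and `τ(u)`. -/
noncomputable def H (q : ℝ) (u : ℝ × ℝ) : Set (ℝ × ℝ) :=
  {w | ((tau q u).2 - u.2) * (w.1 - u.1) + (u.1 - (tau q u).1) * (w.2 - u.2) ≤ 0}

noncomputable def Area (q : ℝ) (k : ℝ × ℝ) : Set (ℝ × ℝ) :=
  W q ∩ ⋂ u ∈ Points q k, H q u

/-- The half-open segment from `u` (inclusive) to `τ(u)` (exclusive). -/
noncomputable def L (q : ℝ) (u : ℝ × ℝ) : Set (ℝ × ℝ) :=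
  {p | ∃ l ∈ Set.Ioc (0:ℝ) 1, p = l • u + (1 - l) • tau q u}

noncomputable def F (q : ℝ) (p w : ℝ × ℝ) : ℝ :=
  ((tau q p).2 - p.2) * (w.1 - p.1) + (p.1 - (tau q p).1) * (w.2 - p.2)

lemma W_eq {q : ℝ} (hq1 : 3/4 < q) (hq2 : q < 1) :
    ∃ a b : ℝ, 0 < a ∧ a < b ∧ b < 1 ∧ a + b = 1 ∧ a * b = 1 - q ∧
      W q = Set.Ioo a b ×ˢ Set.Ici (0:ℝ) := by
  set s := Real.sqrt (4*q-3) with hs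
  have hs2 : s^2 = 4*q-3 := Real.sq_sqrt (by linarith)
  have hs0 : 0 < s := Real.sqrt_pos.2 (by linarith)
  have hs1 : s < 1 := by nlinarith
  refine ⟨(1-s)/2, (1+s)/2, by linarith, by linarith, by linarith, by ring, by nlinarith, ?_⟩
  unfold W
  norm_num [hs]


lemma mem_W {q a b : ℝ} (hW : W q = Set.Ioo a b ×ˢ Set.Ici (0:ℝ)) {w : ℝ × ℝ} :
    w ∈ W q ↔ (a < w.1 ∧ w.1 < b) ∧ 0 ≤ w.2 := by
  rw [hW, Set.mem_prod, Set.mem_Ioo, Set.mem_Ici]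

lemma key_id {q : ℝ} {p w : ℝ × ℝ} (hp0 : p.1 ≠ 0) (hp1 : (1:ℝ) - p.1 ≠ 0)
    (hq : (1:ℝ) - q ≠ 0) (hw0 : w.1 ≠ 0) :
    ((sig q p).1 - p.1) * (w.1 * F q p (tau q w)) =
      (p.1 - (tau q p).1) * F q (sig q p) w := by
  simp only [F, sig, tau]
  field_simp
  ring

section Aux
variable {q a b : ℝ} {k : ℝ × ℝ}

lemma tau_mem (ha : 0 < a) (hab : a < b) (hb1 : b < 1) (hsum : a + b = 1)
    (hprod : a * b = 1 - q) {w : ℝ × ℝ} (h1 : a < w.1) (h2 : w.1 < b) (h3 : 0 ≤ w.2) :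
    (a < (tau q w).1 ∧ (tau q w).1 < b) ∧ 0 ≤ (tau q w).2 := by
  have hx : 0 < w.1 := ha.trans h1
  have hb0 : 0 < b := ha.trans hab
  refine ⟨⟨?_, ?_⟩, ?_⟩
  · show a < (q - 1 + w.1)/w.1
    rw [lt_div_iff₀ hx]
    nlinarith [mul_pos hb0 (sub_pos.2 h1)]
  · show (q - 1 + w.1)/w.1 < b
    rw [div_lt_iff₀ hx]
    nlinarith [mul_pos ha (sub_pos.2 h2)]
  · exact div_nonneg h3 hx.le

lemma sig_mem (ha : 0 < a) (hab : a < b) (hb1 : b < 1) (hsum : a + b = 1)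
    (hprod : a * b = 1 - q) {w : ℝ × ℝ} (h1 : a < w.1) (h2 : w.1 < b) (h3 : 0 ≤ w.2) :
    (a < (sig q w).1 ∧ (sig q w).1 < b) ∧ 0 ≤ (sig q w).2 := by
  have h1x : 0 < 1 - w.1 := by linarith
  have hb0 : 0 < b := ha.trans hab
  refine ⟨⟨?_, ?_⟩, ?_⟩
  · show a < (1 - q)/(1 - w.1)
    rw [lt_div_iff₀ h1x]
    nlinarith [mul_pos ha (sub_pos.2 h1)]
  · show (1 - q)/(1 - w.1) < b
    rw [div_lt_iff₀ h1x]
    nlinarith [mul_pos hb0 (sub_pos.2 h2)]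
  · exact div_nonneg (mul_nonneg h3 (by nlinarith [mul_pos ha hb0])) h1x.le

lemma sig_iter_mem (ha : 0 < a) (hab : a < b) (hb1 : b < 1) (hsum : a + b = 1)
    (hprod : a * b = 1 - q) (hW : W q = Set.Ioo a b ×ˢ Set.Ici (0:ℝ))
    (hk : k ∈ W q) : ∀ n, (sig q)^[n] k ∈ W q := by
  intro n
  induction n with
  | zero => exact hk
  | succ n ih =>
    rw [Function.iterate_succ_apply']
    rw [mem_W hW] at ih ⊢
    exact sig_mem ha hab hb1 hsum hprod ih.1.1 ih.1.2 ih.2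

lemma tau_iter_mem (ha : 0 < a) (hab : a < b) (hb1 : b < 1) (hsum : a + b = 1)
    (hprod : a * b = 1 - q) (hW : W q = Set.Ioo a b ×ˢ Set.Ici (0:ℝ))
    (hk : k ∈ W q) : ∀ n, (tau q)^[n] k ∈ W q := by
  intro n
  induction n with
  | zero => exact hk
  | succ n ih =>
    rw [Function.iterate_succ_apply']
    rw [mem_W hW] at ih ⊢
    exact tau_mem ha hab hb1 hsum hprod ih.1.1 ih.1.2 ih.2

lemma points_mem_W (ha : 0 < a) (hab : a < b) (hb1 : b < 1) (hsum : a + b = 1)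
    (hprod : a * b = 1 - q) (hW : W q = Set.Ioo a b ×ˢ Set.Ici (0:ℝ))
    (hk : k ∈ W q) {p : ℝ × ℝ} (hp : p ∈ Points q k) : p ∈ W q := by
  obtain ⟨n, h | h⟩ := hp
  · exact h ▸ tau_iter_mem ha hab hb1 hsum hprod hW hk n
  · exact h ▸ sig_iter_mem ha hab hb1 hsum hprod hW hk n

lemma sig_tau {w : ℝ × ℝ} (hq : (1:ℝ) - q ≠ 0) (hx : w.1 ≠ 0) : sig q (tau q w) = w := by
  have h : 1 - (q - 1 + w.1)/w.1 = (1-q)/w.1 := by field_simp; ring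
  have h1 : (sig q (tau q w)).1 = w.1 := by
    show (1 - q)/(1 - (q - 1 + w.1)/w.1) = w.1
    rw [h]; field_simp
  have h2 : (sig q (tau q w)).2 = w.2 := by
    show (w.2/w.1) * (1 - q)/(1 - (q - 1 + w.1)/w.1) = w.2
    rw [h]; field_simp
  exact Prod.ext h1 h2

lemma tau_sig {w : ℝ × ℝ} (hq : (1:ℝ) - q ≠ 0) (hx : w.1 ≠ 1) : tau q (sig q w) = w := by
  have hx' : 1 - w.1 ≠ 0 := sub_ne_zero.2 (Ne.symm hx)
  have hσ0 : (1 - q)/(1 - w.1) ≠ 0 := div_ne_zero hq hx'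
  have h1 : (tau q (sig q w)).1 = w.1 := by
    show (q - 1 + (1 - q)/(1 - w.1))/((1 - q)/(1 - w.1)) = w.1
    field_simp
    ring
  have h2 : (tau q (sig q w)).2 = w.2 := by
    show (w.2 * (1 - q)/(1 - w.1))/((1 - q)/(1 - w.1)) = w.2
    field_simp
  exact Prod.ext h1 h2

lemma sig_points (ha : 0 < a) (hab : a < b) (hb1 : b < 1) (hsum : a + b = 1)
    (hprod : a * b = 1 - q) (hW : W q = Set.Ioo a b ×ˢ Set.Ici (0:ℝ))
    (hk : k ∈ W q) (hq : (1:ℝ) - q ≠ 0) {p : ℝ × ℝ} (hp : p ∈ Points q k) :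
    sig q p ∈ Points q k := by
  obtain ⟨n, h | h⟩ := hp
  · cases n with
    | zero => exact ⟨1, Or.inr (by rw [h]; rfl)⟩
    | succ m =>
      refine ⟨m, Or.inl ?_⟩
      have hm : (tau q)^[m] k ∈ W q := tau_iter_mem ha hab hb1 hsum hprod hW hk m
      have hm0 : ((tau q)^[m] k).1 ≠ 0 := ne_of_gt (ha.trans ((mem_W hW).1 hm).1.1)
      rw [h, Function.iterate_succ_apply', sig_tau hq hm0]
  · exact ⟨n + 1, Or.inr (by rw [h, Function.iterate_succ_apply'])⟩

lemma F_affine (q : ℝ) (p u w : ℝ × ℝ) (l : ℝ) :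
    F q p (l • u + (1 - l) • w) = l * F q p u + (1 - l) * F q p w := by
  simp only [F, Prod.fst_add, Prod.snd_add, Prod.smul_fst, Prod.smul_snd, smul_eq_mul]
  ring

lemma not_in_area {w p' : ℝ × ℝ} (hp' : p' ∈ Points q k) (hF : 0 < F q p' w) :
    w ∉ Area q k := by
  intro hw
  have hw' : w ∈ W q ∩ ⋂ u ∈ Points q k, H q u := hw
  have : F q p' w ≤ 0 := Set.mem_iInter₂.1 hw'.2 p' hp'
  linarith

lemma exists_iter_le (ha : 0 < a) (hab : a < b) (hb1 : b < 1) (hsum : a + b = 1)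
    (hprod : a * b = 1 - q) (hW : W q = Set.Ioo a b ×ˢ Set.Ici (0:ℝ))
    (hk : k ∈ W q) {t : ℝ} (hta : a < t) (htk : t ≤ k.1) :
    ∃ n, ((sig q)^[n] k).1 ≤ t := by
  have hkm := (mem_W hW).1 hk
  have hk1a : a < k.1 := hkm.1.1
  have hk1b : k.1 < b := hkm.1.2
  have h1k : 0 < 1 - k.1 := by linarith
  set r := a / (1 - k.1) with hr
  have hr0 : 0 ≤ r := div_nonneg ha.le h1k.le
  have hr1 : r < 1 := (div_lt_one h1k).2 (by linarith)
  have hra : r * (1 - k.1) = a := div_mul_cancel₀ a h1k.ne'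
  have hbound : ∀ n, ((sig q)^[n] k).1 ≤ k.1 ∧ ((sig q)^[n] k).1 - a ≤ r^n * (k.1 - a) := by
    intro n
    induction n with
    | zero => constructor <;> simp
    | succ n ih =>
      obtain ⟨ih1, ih2⟩ := ih
      have hmem := (mem_W hW).1 (sig_iter_mem ha hab hb1 hsum hprod hW hk n)
      set x := ((sig q)^[n] k).1 with hx
      have hax : a < x := hmem.1.1
      have hxb : x < b := hmem.1.2
      have h1x : 0 < 1 - x := by linarith
      rw [Function.iterate_succ_apply']
      have hσ1 : ((sig q) ((sig q)^[n] k)).1 = (1-q)/(1-x) := rfl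
      have hle : (1-q)/(1-x) ≤ x := by
        rw [div_le_iff₀ h1x]
        nlinarith [mul_nonneg (sub_pos.2 hax).le (sub_pos.2 hxb).le]
      constructor
      · rw [hσ1]; linarith
      · rw [hσ1]
        have hstep : (1-q)/(1-x) - a = a*(x-a)/(1-x) := by
          field_simp
          nlinarith [hprod, hsum]
        rw [hstep]
        have h2 : a*(x-a)/(1-x) ≤ r*(x-a) := by
          rw [div_le_iff₀ h1x]
          nlinarith [mul_nonneg (mul_nonneg hr0 (sub_pos.2 hax).le) (sub_nonneg.2 ih1)]
        have h3 : r*(x-a) ≤ r*(r^n*(k.1-a)) :=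
          mul_le_mul_of_nonneg_left (by linarith) hr0
        have h4 : r*(r^n*(k.1-a)) = r^(n+1)*(k.1-a) := by rw [pow_succ]; ring
        linarith
  obtain ⟨m, hm⟩ := exists_pow_lt_of_lt_one
    (show (0:ℝ) < (t - a)/(k.1 - a) from div_pos (by linarith) (by linarith)) hr1
  refine ⟨m, ?_⟩
  have h2 := (hbound m).2
  have hlt : r^m * (k.1 - a) < t - a := (lt_div_iff₀ (by linarith : (0:ℝ) < k.1 - a)).1 hm
  linarith

lemma key (ha : 0 < a) (hab : a < b) (hb1 : b < 1) (hsum : a + b = 1)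
    (hprod : a * b = 1 - q) {p w : ℝ × ℝ} (hp1 : a < p.1) (hp2 : p.1 < b)
    (hw1 : a < w.1) (hw2 : w.1 < b) (h : 0 < F q p (tau q w)) :
    0 < F q (sig q p) w := by
  have hq0 : 0 < 1 - q := by nlinarith
  have hp0 : 0 < p.1 := ha.trans hp1
  have h1p : 0 < 1 - p.1 := by linarith
  have hx0 : 0 < w.1 := ha.trans hw1
  have hid := key_id (q := q) (p := p) (w := w) hp0.ne' h1p.ne' hq0.ne' hx0.ne'
  have hσlt : (sig q p).1 - p.1 < 0 := by
    have : (1 - q)/(1 - p.1) < p.1 := by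
      rw [div_lt_iff₀ h1p]
      nlinarith [mul_pos (sub_pos.2 hp1) (sub_pos.2 hp2)]
    simpa [sig] using sub_neg.2 this
  have hτ : p.1 - (tau q p).1 < 0 := by
    have : p.1 < (q - 1 + p.1)/p.1 := by
      rw [lt_div_iff₀ hp0]
      nlinarith [mul_pos (sub_pos.2 hp1) (sub_pos.2 hp2)]
    simpa [tau] using sub_neg.2 this
  have hL : ((sig q p).1 - p.1) * (w.1 * F q p (tau q w)) < 0 :=
    mul_neg_of_neg_of_pos hσlt (mul_pos hx0 h)
  rw [hid] at hL
  by_contra hc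
  push_neg at hc
  nlinarith [mul_nonneg (neg_nonneg.2 hτ.le) (neg_nonneg.2 hc)]

end Aux

theorem out_of_area_on_segment (q : ℝ) (hq1 : 3/4 < q) (hq2 : q < 1)
    (k : ℝ × ℝ) (hk : k ∈ W q) (hk2 : 0 < k.2)
    (v : ℝ × ℝ) (hv : v ∈ W q \ Area q k) (hv1 : v.1 ≤ k.1) :
    ∃ u ∈ W q \ Area q k, (∃ n : ℕ, u.1 = ((sig q)^[n] k).1) ∧ v ∈ L q u := by
  classical
  obtain ⟨a, b, ha, hab, hb1, hsum, hprod, hW⟩ := W_eq hq1 hq2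
  have hq' : (1:ℝ) - q ≠ 0 := by linarith
  obtain ⟨hvW, hvA⟩ := hv
  have hvm := (mem_W hW).1 hvW
  have hkm := (mem_W hW).1 hk
  have hex : ∃ n, ((sig q)^[n] k).1 ≤ v.1 :=
    exists_iter_le ha hab hb1 hsum hprod hW hk hvm.1.1 hv1
  obtain ⟨n, hnle, hnmin⟩ : ∃ n : ℕ, ((sig q)^[n] k).1 ≤ v.1 ∧
      ∀ m, m < n → v.1 < ((sig q)^[m] k).1 :=
    ⟨Nat.find hex, Nat.find_spec hex, fun m hm => lt_of_not_ge (Nat.find_min hex hm)⟩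
  -- v.1 is below the image of the n-th iterate under tau
  have hvT : v.1 < (tau q ((sig q)^[n] k)).1 := by
    cases n with
    | zero =>
      have hk0 : 0 < k.1 := ha.trans hkm.1.1
      have : k.1 < (q - 1 + k.1)/k.1 := by
        rw [lt_div_iff₀ hk0]
        nlinarith [mul_pos (sub_pos.2 hkm.1.1) (sub_pos.2 hkm.1.2)]
      simp only [Function.iterate_zero_apply]
      exact lt_of_le_of_lt hv1 this
    | succ m =>
      have hmW := (mem_W hW).1 (sig_iter_mem ha hab hb1 hsum hprod hW hk m)
      have h1 : ((sig q)^[m] k).1 ≠ 1 := ne_of_lt (hmW.1.2.trans hb1)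
      rw [Function.iterate_succ_apply', tau_sig hq' h1]
      exact hnmin m (Nat.lt_succ_self m)
  set p := (sig q)^[n] k with hp
  have hpW : p ∈ W q := sig_iter_mem ha hab hb1 hsum hprod hW hk n
  have hpm := (mem_W hW).1 hpW
  have hp0 : 0 < p.1 := ha.trans hpm.1.1
  have hTgt : p.1 < (tau q p).1 := by
    show p.1 < (q - 1 + p.1)/p.1
    rw [lt_div_iff₀ hp0]
    nlinarith [mul_pos (sub_pos.2 hpm.1.1) (sub_pos.2 hpm.1.2)]
  set T := (tau q p).1 with hT
  have hTp : 0 < T - p.1 := sub_pos.2 hTgt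
  set l := (T - v.1)/(T - p.1) with hl
  have hl0 : 0 < l := div_pos (sub_pos.2 hvT) hTp
  have hl1 : l ≤ 1 := (div_le_one hTp).2 (by linarith)
  set d := l + (1 - l)/p.1 with hd
  have hd0 : 0 < d := add_pos_of_pos_of_nonneg hl0 (div_nonneg (by linarith) hp0.le)
  set u2 := v.2 / d with hu2
  have hu2d : u2 * d = v.2 := div_mul_cancel₀ _ hd0.ne'
  set u : ℝ × ℝ := (p.1, u2) with hu
  have hu1 : u.1 = p.1 := rfl
  have huW : u ∈ W q := (mem_W hW).2 ⟨⟨hpm.1.1, hpm.1.2⟩, div_nonneg hvm.2 hd0.le⟩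
  have hua : a < u.1 := hpm.1.1
  have hub : u.1 < b := hpm.1.2
  have htu1 : (tau q u).1 = T := rfl
  have htu2 : (tau q u).2 = u2 / p.1 := rfl
  have hlm : l * (T - p.1) = T - v.1 := div_mul_cancel₀ _ hTp.ne'
  have hc1 : l * u.1 + (1 - l) * (tau q u).1 = v.1 := by
    rw [hu1, htu1]
    linear_combination (-1 : ℝ) * hlm
  have hc2 : l * u.2 + (1 - l) * (tau q u).2 = v.2 := by
    rw [htu2]
    show l * u2 + (1 - l) * (u2 / p.1) = v.2
    rw [← hu2d, hd]
    ring
  have hseg : v = l • u + (1 - l) • tau q u := by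
    refine Prod.ext ?_ ?_
    · simp only [Prod.fst_add, Prod.smul_fst, smul_eq_mul]
      exact hc1.symm
    · simp only [Prod.snd_add, Prod.smul_snd, smul_eq_mul]
      exact hc2.symm
  have hvL : v ∈ L q u := ⟨l, ⟨hl0, hl1⟩, hseg⟩
  have hun : ∃ m : ℕ, u.1 = ((sig q)^[m] k).1 := ⟨n, by rw [hu1, hp]⟩
  -- extract a violated constraint
  obtain ⟨p', hp'P, hFv⟩ : ∃ p' ∈ Points q k, 0 < F q p' v := by
    by_contra hcon
    push_neg at hcon
    refine hvA ⟨hvW, Set.mem_iInter₂.2 fun p' hp' => ?_⟩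
    exact (hcon p' hp' : F q p' v ≤ 0)
  have hFv' : F q p' v = l * F q p' u + (1 - l) * F q p' (tau q u) := by
    rw [hseg]; exact F_affine q p' u (tau q u) l
  have hp'W : p' ∈ W q := points_mem_W ha hab hb1 hsum hprod hW hk hp'P
  have hp'm := (mem_W hW).1 hp'W
  by_cases hFu : 0 < F q p' u
  · exact ⟨u, ⟨huW, not_in_area hp'P hFu⟩, hun, hvL⟩
  · push_neg at hFu
    have hFtu : 0 < F q p' (tau q u) := by
      by_contra hc
      push_neg at hc
      nlinarith [mul_nonneg hl0.le (neg_nonneg.2 hFu),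
        mul_nonneg (by linarith : (0:ℝ) ≤ 1 - l) (neg_nonneg.2 hc)]
    have hkey : 0 < F q (sig q p') u :=
      key ha hab hb1 hsum hprod hp'm.1.1 hp'm.1.2 hua hub hFtu
    have hσp' : sig q p' ∈ Points q k :=
      sig_points ha hab hb1 hsum hprod hW hk hq' hp'P
    exact ⟨u, ⟨huW, not_in_area hσp' hkey⟩, hun, hvL⟩
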